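/- Let P : V_1 × ... × V_d → k and P^l_{j_1,...,j_d} : M_{s_1×t}(k) × ... × M_{s_d×t}(k) → k be defined by P^l_{j_1,...,j_d}(A_1,...,A_d) = (P_l ∘ (A_1 × ... × A_d))(e_{j_1},...,e_{j_d}) for multilinear forms P_1,...,P_n on k^{s_1} × ... × k^{s_d}. Then the collective partition rank of the family (P^l_{j_1,...,j_d}) over all l ∈ [n] and (j_1,...,j_d) ∈ [t]^d equals prk_k(P_1,...,P_n). -/

import Mathlib

open scoped BigOperators

/-- A multilinear form has partition rank one if it factors as a product of two
multilinear forms on complementary nonempty subsets of the coordinates. -/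
def IsPartRankOne {k : Type*} [Field k] {d : ℕ} {V : Fin d → Type*}
    [∀ i, AddCommGroup (V i)] [∀ i, Module k (V i)]
    (P : MultilinearMap k V k) : Prop :=
  ∃ I : Set (Fin d), I.Nonempty ∧ Iᶜ.Nonempty ∧
    ∃ (R : MultilinearMap k (fun i : I => V i.1) k)
      (S : MultilinearMap k (fun j : ↥Iᶜ => V j.1) k),
      ∀ x : (∀ i, V i), P x = R (fun i => x i.1) * S (fun j => x j.1)

/-- `P` is a sum of `r` partition-rank-one multilinear forms. -/
def HasPrkDecomp {k : Type*} [Field k] {d : ℕ} {V : Fin d → Type*}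
    [∀ i, AddCommGroup (V i)] [∀ i, Module k (V i)]
    (P : MultilinearMap k V k) (r : ℕ) : Prop :=
  ∃ Q : Fin r → MultilinearMap k V k, (∀ i, IsPartRankOne (Q i)) ∧ P = ∑ i, Q i

/-- The partition rank of a multilinear form. -/
noncomputable def prk {k : Type*} [Field k] {d : ℕ} {V : Fin d → Type*}
    [∀ i, AddCommGroup (V i)] [∀ i, Module k (V i)]
    (P : MultilinearMap k V k) : ℕ :=
  sInf {r | HasPrkDecomp P r}

/-- The collective partition rank of a family of multilinear forms: the minimum partition
rank of a nontrivial linear combination. -/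
noncomputable def cprk {k : Type*} [Field k] {d : ℕ} {V : Fin d → Type*}
    [∀ i, AddCommGroup (V i)] [∀ i, Module k (V i)]
    {ι : Type*} [Fintype ι] (P : ι → MultilinearMap k V k) : ℕ :=
  sInf {r | ∃ a : ι → k, a ≠ 0 ∧ HasPrkDecomp (∑ i, a i • P i) r}

/-- The linear map extracting the `j`-th column entries of a matrix, as a vector. -/
def colProj (k : Type*) [Field k] {s t : ℕ} (j : Fin t) :
    Matrix (Fin s) (Fin t) k →ₗ[k] (Fin s → k) where
  toFun A := fun m => A m j
  map_add' _ _ := rfl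
  map_smul' _ _ := rfl

/-- `P_{j_1,...,j_d}(A_1,...,A_d) = P(A_1 e_{j_1}, ..., A_d e_{j_d})`, the multilinear form
on matrix spaces obtained by substituting the `j_i`-th column of `A_i` for `x_i`. -/
noncomputable def matrixSubstForm {k : Type*} [Field k] {d : ℕ} {s : Fin d → ℕ} {t : ℕ}
    (P : MultilinearMap k (fun i : Fin d => Fin (s i) → k) k) (j : Fin d → Fin t) :
    MultilinearMap k (fun i : Fin d => Matrix (Fin (s i)) (Fin t) k) k :=
  P.compLinearMap (fun i => colProj k (j i))

section Aux

variable {k : Type*} [Field k] {d : ℕ} {V W : Fin d → Type*}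
    [∀ i, AddCommGroup (V i)] [∀ i, Module k (V i)]
    [∀ i, AddCommGroup (W i)] [∀ i, Module k (W i)]

lemma isPartRankOne_compLinearMap (P : MultilinearMap k V k) (f : ∀ i, W i →ₗ[k] V i)
    (h : IsPartRankOne P) : IsPartRankOne (P.compLinearMap f) := by
  obtain ⟨I, hI, hIc, R, S, hRS⟩ := h
  refine ⟨I, hI, hIc, R.compLinearMap (fun i => f i.1), S.compLinearMap (fun j => f j.1), ?_⟩
  intro x
  simpa only [MultilinearMap.compLinearMap_apply] using hRS (fun i => f i (x i))

lemma hasPrkDecomp_compLinearMap (P : MultilinearMap k V k) (f : ∀ i, W i →ₗ[k] V i)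
    {r : ℕ} (h : HasPrkDecomp P r) : HasPrkDecomp (P.compLinearMap f) r := by
  obtain ⟨Q, hQ, hsum⟩ := h
  refine ⟨fun i => (Q i).compLinearMap f, fun i => isPartRankOne_compLinearMap _ _ (hQ i), ?_⟩
  ext x
  simp [hsum]

lemma compLinearMap_sum_smul {ι : Type*} [Fintype ι] (c : ι → k)
    (F : ι → MultilinearMap k V k) (f : ∀ i, W i →ₗ[k] V i) :
    (∑ i, c i • F i).compLinearMap f = ∑ i, c i • (F i).compLinearMap f := by
  ext x
  simp

end Aux

/-- Embedding of vectors into matrices in column `j₀`. -/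
def colEmbed (k : Type*) [Field k] {s t : ℕ} (j₀ : Fin t) :
    (Fin s → k) →ₗ[k] Matrix (Fin s) (Fin t) k where
  toFun x := fun m c => if c = j₀ then x m else 0
  map_add' x y := by funext m c; show (if c = j₀ then (x + y) m else 0) = (if c = j₀ then x m else 0) + (if c = j₀ then y m else 0); by_cases h : c = j₀ <;> simp [h]
  map_smul' a x := by funext m c; show (if c = j₀ then (a • x) m else 0) = a • (if c = j₀ then x m else 0); by_cases h : c = j₀ <;> simp [h]

lemma subst_embed {k : Type*} [Field k] {d : ℕ} {s : Fin d → ℕ} {t : ℕ}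
    (Q : MultilinearMap k (fun i : Fin d => Fin (s i) → k) k) (j j₀ : Fin d → Fin t) :
    (matrixSubstForm Q j).compLinearMap (fun i => colEmbed k (j₀ i)) =
      if j = j₀ then Q else 0 := by
  by_cases h : j = j₀
  · subst h
    rw [if_pos rfl]
    refine MultilinearMap.ext fun x => ?_
    simp [matrixSubstForm, colProj, colEmbed]
    congr 1
    funext i m
    show (if j i = j i then x i m else 0) = x i m
    simp
  · rw [if_neg h]
    refine MultilinearMap.ext fun x => ?_
    obtain ⟨i, hi⟩ := Function.ne_iff.mp h
    have hz : (fun i' => colProj k (j i') (colEmbed k (j₀ i') (x i'))) i = 0 := by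
      funext m
      show (if j i = j₀ i then x i m else 0) = 0
      simp [colProj, colEmbed, hi]
    simp only [MultilinearMap.compLinearMap_apply, MultilinearMap.zero_apply]
    exact Q.map_coord_zero i hz


/-- the collective partition rank of the family `(P^l_{j_1,...,j_d})` over all
`l ∈ [n]`, `(j_1,...,j_d) ∈ [t]^d` equals the collective partition rank of `(P_1,...,P_n)`. -/
theorem matrix_subst_family_cprk {k : Type*} [Field k] {d : ℕ} {s : Fin d → ℕ} {t n : ℕ}
    (hd : 2 ≤ d) (hn : 0 < n) (ht : 0 < t)
    (P : Fin n → MultilinearMap k (fun i : Fin d => Fin (s i) → k) k) :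
    cprk (fun lj : Fin n × (Fin d → Fin t) => matrixSubstForm (P lj.1) lj.2) = cprk P := by
  unfold cprk
  congr 1
  ext r
  simp only [Set.mem_setOf_eq]
  constructor
  · rintro ⟨b, hb, Qb⟩
    obtain ⟨lj, hlj⟩ : ∃ lj, b lj ≠ 0 := by
      by_contra h
      push_neg at h
      exact hb (funext h)
    refine ⟨fun l => b (l, lj.2), ?_, ?_⟩
    · intro h
      exact hlj (congrFun h lj.1)
    · have key : (∑ x : Fin n × (Fin d → Fin t), b x • matrixSubstForm (P x.1) x.2).compLinearMap
          (fun i => colEmbed k (lj.2 i)) = ∑ l, b (l, lj.2) • P l := by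
        rw [compLinearMap_sum_smul]
        have : ∀ x : Fin n × (Fin d → Fin t),
            b x • (matrixSubstForm (P x.1) x.2).compLinearMap (fun i => colEmbed k (lj.2 i)) =
            b x • (if x.2 = lj.2 then P x.1 else 0) := by
          intro x; rw [subst_embed]
        rw [Finset.sum_congr rfl (fun x _ => this x), Fintype.sum_prod_type]
        refine Finset.sum_congr rfl (fun l _ => ?_)
        rw [Finset.sum_eq_single lj.2]
        · simp
        · intro j _ hj
          simp [hj]
        · simp
      rw [← key]
      exact hasPrkDecomp_compLinearMap _ _ Qb
  · rintro ⟨a, ha, Qa⟩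
    obtain ⟨l₀, hl₀⟩ : ∃ l, a l ≠ 0 := by
      by_contra h
      push_neg at h
      exact ha (funext h)
    let j₀ : Fin d → Fin t := fun _ => ⟨0, ht⟩
    refine ⟨fun lj => if lj.2 = j₀ then a lj.1 else 0, ?_, ?_⟩
    · intro h
      have := congrFun h (l₀, j₀)
      simp at this
      exact hl₀ this
    · have key : (∑ lj : Fin n × (Fin d → Fin t),
          (if lj.2 = j₀ then a lj.1 else 0) • matrixSubstForm (P lj.1) lj.2) =
          (∑ l, a l • P l).compLinearMap (fun i => colProj k (j₀ i)) := by
        rw [compLinearMap_sum_smul, Fintype.sum_prod_type]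
        refine Finset.sum_congr rfl (fun l _ => ?_)
        rw [Finset.sum_eq_single j₀]
        · simp [matrixSubstForm]
        · intro j _ hj
          simp [hj]
        · simp
      rw [key]
      exact hasPrkDecomp_compLinearMap _ _ Qa
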